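/- Let O be the ring of integers of a local field with residue field of q elements, r ≥ i ≥ r/2, and K_i = 1 + π^i·M_2(O/π^r) the i-th congruence subgroup of GL_2(O/π^r). The map sending β ∈ M_2(O/π^{r-i}) to the character ψ_β(x) = ψ(Tr(β(x−1))) of K_i ∩ SL_2 has kernel exactly the scalar matrices Z_{r-i}, inducing an isomorphism M_2(O/π^{r-i})/Z_{r-i} ≅ Hom(K_i ∩ SL_2(O/π^r), ℂ^×). -/

import Mathlib

open Ideal Ideal.Quotient

lemma aux_finite_quot {O : Type*} [CommRing O] (π : O) [Finite (O ⧸ Ideal.span {π})] :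
    ∀ k : ℕ, Finite (O ⧸ Ideal.span {π ^ k}) := by
  intro k
  induction k with
  | zero =>
    have : Ideal.span ({π ^ 0} : Set O) = ⊤ := by simp [Ideal.span_singleton_one]
    rw [this]
    exact Finite.of_subsingleton
  | succ k ih =>
    set I := Ideal.span ({π ^ (k+1)} : Set O)
    let f : (O ⧸ Ideal.span {π ^ k}) × (O ⧸ Ideal.span {π}) → O ⧸ I :=
      fun bc => Ideal.Quotient.mk I (bc.1.out + π ^ k * bc.2.out)
    apply Finite.of_surjective f
    intro x
    obtain ⟨u, rfl⟩ := Ideal.Quotient.mk_surjective x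
    set b := Ideal.Quotient.mk (Ideal.span {π ^ k}) u with hb
    have hb1 : u - b.out ∈ Ideal.span ({π ^ k} : Set O) := by
      rw [← Ideal.Quotient.eq, hb]
      exact (Quotient.out_eq _).symm
    obtain ⟨y, hy⟩ := Ideal.mem_span_singleton.mp hb1
    set c := Ideal.Quotient.mk (Ideal.span {π}) y with hc
    have hc1 : y - c.out ∈ Ideal.span ({π} : Set O) := by
      rw [← Ideal.Quotient.eq, hc]
      exact (Quotient.out_eq _).symm
    obtain ⟨z, hz⟩ := Ideal.mem_span_singleton.mp hc1
    refine ⟨(b, c), ?_⟩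
    have : u = b.out + π ^ k * c.out + π ^ (k+1) * z := by
      have h1 : u = b.out + π ^ k * y := by linear_combination hy
      have h2 : y = c.out + π * z := by linear_combination hz
      rw [h1, h2]; ring
    show Ideal.Quotient.mk I _ = _
    rw [this]
    rw [map_add, map_add]
    have : Ideal.Quotient.mk I (π ^ (k+1) * z) = 0 := by
      rw [Ideal.Quotient.eq_zero_iff_mem]
      exact Ideal.mem_span_singleton.mpr ⟨z, rfl⟩
    rw [this, add_zero, ← map_add]

lemma aux_nondeg {O : Type*} [CommRing O] [IsDomain O] [IsDiscreteValuationRing O]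
    (π : O) (hπ : Irreducible π) (r : ℕ) (hr : 1 ≤ r)
    (ψ : AddChar (O ⧸ Ideal.span {π ^ r}) ℂ)
    (hψ : ∃ a : O ⧸ Ideal.span {π ^ r},
      ψ ((Ideal.Quotient.mk (Ideal.span {π ^ r}) π) ^ (r - 1) * a) ≠ 1)
    (t : O ⧸ Ideal.span {π ^ r}) (h : ∀ a, ψ (t * a) = 1) : t = 0 := by
  obtain ⟨a₀, ha₀⟩ := hψ
  by_contra ht
  obtain ⟨u, rfl⟩ := Ideal.Quotient.mk_surjective t
  have hu0 : u ≠ 0 := by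
    rintro rfl; exact ht (map_zero _)
  obtain ⟨n, w, hw⟩ := IsDiscreteValuationRing.eq_unit_mul_pow_irreducible hu0 hπ
  have hnr : n < r := by
    by_contra hn
    push_neg at hn
    apply ht
    rw [Ideal.Quotient.eq_zero_iff_mem, Ideal.mem_span_singleton, hw]
    exact Dvd.dvd.mul_left (pow_dvd_pow π hn) _
  have key : (Ideal.Quotient.mk (Ideal.span {π ^ r}) π) ^ (r - 1) * a₀ =
      (Ideal.Quotient.mk (Ideal.span {π ^ r}) u) *
        ((Ideal.Quotient.mk (Ideal.span {π ^ r})) (π ^ (r - 1 - n) * (↑w⁻¹ : O)) * a₀) := by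
    rw [← mul_assoc, ← map_pow, ← _root_.map_mul]
    congr 2
    rw [hw]
    have : (w : O) * π ^ n * (π ^ (r - 1 - n) * (↑w⁻¹ : O)) =
        (w * w⁻¹ : Oˣ) * (π ^ (n + (r - 1 - n))) := by push_cast; ring
    rw [this, mul_inv_cancel, Units.val_one, one_mul]
    congr 1
    omega
  rw [key] at ha₀
  exact ha₀ (h _)

lemma aux_cancel {O : Type*} [CommRing O] [IsDomain O]
    (π : O) (hπ : π ≠ 0) (r j : ℕ) (hj : j ≤ r)
    (c : O ⧸ Ideal.span {π ^ r})
    (h : (Ideal.Quotient.mk (Ideal.span {π ^ r}) π) ^ j * c = 0) :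
    ∃ d, c = (Ideal.Quotient.mk (Ideal.span {π ^ r}) π) ^ (r - j) * d := by
  obtain ⟨u, rfl⟩ := Ideal.Quotient.mk_surjective c
  rw [← map_pow, ← _root_.map_mul, Ideal.Quotient.eq_zero_iff_mem, Ideal.mem_span_singleton] at h
  obtain ⟨v, hv⟩ := h
  have : π ^ j * u = π ^ j * (π ^ (r - j) * v) := by
    rw [hv, ← mul_assoc, ← pow_add]
    congr 2
    omega
  have hu : u = π ^ (r - j) * v := mul_left_cancel₀ (pow_ne_zero _ hπ) this
  exact ⟨Ideal.Quotient.mk _ v, by rw [hu, _root_.map_mul, map_pow]⟩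



set_option maxHeartbeats 1600000 in


/-- Let `O` be the ring of integers of a local field with finite residue field, `π` a
uniformizer, `r ≥ i ≥ r/2`, and `K_i` the kernel of reduction `SL_2(O/π^r) → SL_2(O/π^i)`.
Fix an additive character `ψ` of `O/π^r` of conductor `π^r`.  The map sending (a lift of)
`β ∈ M_2(O/π^{r-i})` to the character `ψ_β(x) = ψ(Tr(β(x−1)))` of `K_i` is multiplicative
in `x`, additive in `β`, its kernel consists exactly of the (lifts of) scalar matrices
`Z_{r-i}`, and it hits every character; i.e. it induces an isomorphism
`M_2(O/π^{r-i})/Z_{r-i} ≅ Hom(K_i, ℂ^×)`. -/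
theorem characters_of_congruence_kernel {O : Type*} [CommRing O] [IsDomain O]
    [IsDiscreteValuationRing O] (π : O) (hπ : Irreducible π)
    [Finite (O ⧸ Ideal.span {π})] (r i : ℕ) (hr : 1 ≤ r) (hir : i ≤ r) (h2i : r ≤ 2 * i)
    (ψ : AddChar (O ⧸ Ideal.span {π ^ r}) ℂ)
    (hψ : ∃ a : O ⧸ Ideal.span {π ^ r},
      ψ ((Ideal.Quotient.mk (Ideal.span {π ^ r}) π) ^ (r - 1) * a) ≠ 1) :
    let R := O ⧸ Ideal.span {π ^ r}
    let K := MonoidHom.ker (Matrix.SpecialLinearGroup.map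
      (Ideal.Quotient.factor (S := Ideal.span {π ^ r}) (T := Ideal.span {π ^ i})
        (Ideal.span_singleton_le_span_singleton.mpr (pow_dvd_pow π hir))))
    let Φ : Matrix (Fin 2) (Fin 2) R → K → ℂ := fun β x =>
      ψ ((β * ((x.val.val : Matrix (Fin 2) (Fin 2) R) - 1)).trace)
    (∀ (β : Matrix (Fin 2) (Fin 2) R) (x y : K), Φ β (x * y) = Φ β x * Φ β y) ∧
    (∀ (β γ : Matrix (Fin 2) (Fin 2) R) (x : K), Φ (β + γ) x = Φ β x * Φ γ x) ∧
    (∀ β : Matrix (Fin 2) (Fin 2) R, (∀ x : K, Φ β x = 1) ↔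
      ∃ (z : R) (γ : Matrix (Fin 2) (Fin 2) R),
        β = z • (1 : Matrix (Fin 2) (Fin 2) R) +
          (Ideal.Quotient.mk (Ideal.span {π ^ r}) π) ^ (r - i) • γ) ∧
    (∀ χ : K →* ℂ, ∃ β : Matrix (Fin 2) (Fin 2) R, ∀ x : K, Φ β x = χ x) := by
  intro R K Φ
  set p : R := Ideal.Quotient.mk (Ideal.span {π ^ r}) π with hp
  set f := Ideal.Quotient.factor (S := Ideal.span {π ^ r}) (T := Ideal.span {π ^ i})
        (Ideal.span_singleton_le_span_singleton.mpr (pow_dvd_pow π hir)) with hf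
  -- powers of p vanish
  have hppow : ∀ e : ℕ, r ≤ e → (p : R) ^ e = 0 := by
    intro e he
    rw [hp, ← map_pow, Ideal.Quotient.eq_zero_iff_mem, Ideal.mem_span_singleton]
    exact pow_dvd_pow π he
  have hpii : p ^ i * p ^ i = 0 := by
    rw [← pow_add]; exact hppow _ (by omega)
  have hpri : p ^ i * p ^ (r - i) = 0 := by
    rw [← pow_add]; exact hppow _ (by omega)
  -- membership: entries
  have hmem : ∀ x : K, ∃ m : Matrix (Fin 2) (Fin 2) R,
      (x.val.val : Matrix (Fin 2) (Fin 2) R) = 1 + p ^ i • m := by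
    intro x
    have hx : Matrix.SpecialLinearGroup.map f x.val = 1 := x.2
    have hx' : (f.mapMatrix (x.val.val) : Matrix (Fin 2) (Fin 2) (O ⧸ Ideal.span {π ^ i})) = 1 := by
      have := congrArg Subtype.val hx
      exact this
    have hent : ∀ j k, ∃ d : R,
        x.val.val j k - (1 : Matrix (Fin 2) (Fin 2) R) j k = p ^ i * d := by
      intro j k
      obtain ⟨u, hu⟩ := Ideal.Quotient.mk_surjective (x.val.val j k)
      set c : O := if j = k then 1 else 0 with hc
      have h1R : (1 : Matrix (Fin 2) (Fin 2) R) j k = Ideal.Quotient.mk _ c := by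
        rw [Matrix.one_apply, hc]
        split <;> simp
      have h1S : (1 : Matrix (Fin 2) (Fin 2) (O ⧸ Ideal.span {π ^ i})) j k
          = Ideal.Quotient.mk _ c := by
        rw [Matrix.one_apply, hc]
        split <;> simp
      have hentry : f (x.val.val j k) = (1 : Matrix (Fin 2) (Fin 2) (O ⧸ Ideal.span {π ^ i})) j k := by
        have := congrFun (congrFun hx' j) k
        simpa [RingHom.mapMatrix_apply, Matrix.map_apply] using this
      rw [← hu, hf, Ideal.Quotient.factor_mk, h1S] at hentry
      have : u - c ∈ Ideal.span ({π ^ i} : Set O) := Ideal.Quotient.eq.mp hentry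
      obtain ⟨v, hv⟩ := Ideal.mem_span_singleton.mp this
      refine ⟨Ideal.Quotient.mk _ v, ?_⟩
      rw [← hu, h1R, hp, ← map_pow, ← _root_.map_mul, ← map_sub, hv]
    choose m hm using hent
    refine ⟨Matrix.of m, ?_⟩
    ext j k
    have := hm j k
    simp only [Matrix.add_apply, Matrix.smul_apply, Matrix.of_apply, smul_eq_mul]
    linear_combination this
  -- det formula
  have htr : ∀ m : Matrix (Fin 2) (Fin 2) R,
      Matrix.det (1 + p ^ i • m) = 1 + p ^ i * m.trace := by
    intro m
    rw [Matrix.det_fin_two, Matrix.trace_fin_two]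
    simp only [Matrix.add_apply, Matrix.smul_apply, smul_eq_mul, Matrix.one_apply_eq,
      Matrix.one_apply_ne (by decide : (0 : Fin 2) ≠ 1),
      Matrix.one_apply_ne (by decide : (1 : Fin 2) ≠ 0)]
    have h1 : (p ^ i * m 0 0) * (p ^ i * m 1 1) = 0 := by
      calc (p ^ i * m 0 0) * (p ^ i * m 1 1) = (p ^ i * p ^ i) * (m 0 0 * m 1 1) := by ring
      _ = 0 := by rw [hpii, zero_mul]
    have h2 : (p ^ i * m 0 1) * (p ^ i * m 1 0) = 0 := by
      calc (p ^ i * m 0 1) * (p ^ i * m 1 0) = (p ^ i * p ^ i) * (m 0 1 * m 1 0) := by ring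
      _ = 0 := by rw [hpii, zero_mul]
    linear_combination h1 - h2
  -- trace vanishing for members
  have htrace0 : ∀ m : Matrix (Fin 2) (Fin 2) R, ∀ x : K,
      (x.val.val : Matrix (Fin 2) (Fin 2) R) = 1 + p ^ i • m → p ^ i * m.trace = 0 := by
    intro m x hxm
    have hdet : Matrix.det (x.val.val) = 1 := x.val.2
    rw [hxm, htr] at hdet
    linear_combination hdet
  -- construction of elements
  have helt : ∀ m : Matrix (Fin 2) (Fin 2) R, ∃ x : K,
      m.trace = 0 → (x.val.val : Matrix (Fin 2) (Fin 2) R) = 1 + p ^ i • m := by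
    intro m
    by_cases h : m.trace = 0
    · have hdet : Matrix.det (1 + p ^ i • m) = 1 := by rw [htr, h, mul_zero, add_zero]
      have hker : (⟨1 + p ^ i • m, hdet⟩ : Matrix.SpecialLinearGroup (Fin 2) R) ∈ K := by
        show Matrix.SpecialLinearGroup.map f _ = 1
        apply Subtype.ext
        show f.mapMatrix (1 + p ^ i • m) = 1
        have : f.mapMatrix (p ^ i • m) = 0 := by
          ext j k
          simp only [RingHom.mapMatrix_apply, Matrix.map_apply, Matrix.smul_apply,
            smul_eq_mul, _root_.map_mul, map_pow, Matrix.zero_apply]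
          have : f p = Ideal.Quotient.mk (Ideal.span {π ^ i}) π := by
            rw [hp, hf, Ideal.Quotient.factor_mk]
          rw [this]
          have : (Ideal.Quotient.mk (Ideal.span {π ^ i}) π) ^ i = 0 := by
            rw [← map_pow, Ideal.Quotient.eq_zero_iff_mem]
            exact Ideal.mem_span_singleton.mpr dvd_rfl
          rw [this, zero_mul]
        rw [_root_.map_add, _root_.map_one, this, add_zero]
      exact ⟨⟨_, hker⟩, fun _ => rfl⟩
    · exact ⟨1, fun h' => absurd h' h⟩
  choose elt helt using helt
  -- K equality from values
  have hKext : ∀ x y : K, (x.val.val : Matrix (Fin 2) (Fin 2) R) = y.val.val → x = y := by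
    intro x y h
    exact Subtype.ext (Subtype.ext h)
  -- elt is multiplicative
  have helt_mul : ∀ m n : Matrix (Fin 2) (Fin 2) R, m.trace = 0 → n.trace = 0 →
      elt m * elt n = elt (m + n) := by
    intro m n hm hn
    apply hKext
    have hmn : (m + n).trace = 0 := by rw [Matrix.trace_add, hm, hn, add_zero]
    have h1 : ((elt m * elt n).val.val : Matrix (Fin 2) (Fin 2) R)
        = (elt m).val.val * (elt n).val.val := rfl
    rw [h1, helt m hm, helt n hn, helt _ hmn]
    have h0 : (p ^ i • m) * (p ^ i • n) = 0 := by
      rw [Matrix.smul_mul, Matrix.mul_smul, smul_smul, hpii, zero_smul]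
    rw [smul_add]
    calc (1 + p ^ i • m) * (1 + p ^ i • n)
        = 1 + (p ^ i • m + p ^ i • n) + (p ^ i • m) * (p ^ i • n) := by
          simp only [add_mul, mul_add, one_mul, mul_one]
          abel
      _ = 1 + (p ^ i • m + p ^ i • n) := by rw [h0, add_zero]
  -- elt of p^i-torsion is 1
  have helt_one : ∀ m : Matrix (Fin 2) (Fin 2) R, m.trace = 0 → p ^ i • m = 0 →
      elt m = 1 := by
    intro m hm h0
    apply hKext
    rw [helt m hm, h0, add_zero]
    rfl
  -- surjectivity of elt
  have hsurjK : ∀ x : K, ∃ m : Matrix (Fin 2) (Fin 2) R, m.trace = 0 ∧ x = elt m := by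
    intro x
    obtain ⟨m₀, hm₀⟩ := hmem x
    have h0 : p ^ i * m₀.trace = 0 := htrace0 m₀ x hm₀
    obtain ⟨t, ht⟩ := aux_cancel π hπ.ne_zero r i hir _ h0
    set D : Matrix (Fin 2) (Fin 2) R := !![t, 0; 0, 0] with hD
    refine ⟨m₀ - p ^ (r - i) • D, ?_, ?_⟩
    · rw [Matrix.trace_sub, Matrix.trace_smul, hD, Matrix.trace_fin_two_of, add_zero,
        smul_eq_mul, ht, sub_self]
    · apply hKext
      rw [helt _ ?_]
      · rw [smul_sub, smul_smul, hpri, zero_smul, sub_zero, hm₀]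
      · rw [Matrix.trace_sub, Matrix.trace_smul, hD, Matrix.trace_fin_two_of, add_zero,
          smul_eq_mul, ht, sub_self]
  -- the value of Φ on elt
  have hPhi : ∀ (β m : Matrix (Fin 2) (Fin 2) R), m.trace = 0 →
      Φ β (elt m) = ψ (p ^ i * (β * m).trace) := by
    intro β m hm
    simp only [Φ]
    rw [helt m hm, add_sub_cancel_left, Matrix.mul_smul, Matrix.trace_smul, smul_eq_mul]
  -- duality
  haveI hfinR : Finite R := aux_finite_quot π r
  haveI := Fintype.ofFinite R
  have hnd : ∀ t : R, (∀ a, ψ (t * a) = 1) → t = 0 := aux_nondeg π hπ r hr ψ hψ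
  have hdual : ∀ η : AddChar R ℂ, ∃ c : R, ∀ a, η a = ψ (c * a) := by
    have hinj : Function.Injective (fun c : R => ψ.mulShift c) := by
      intro c c' hcc
      have h' : ∀ a : R, ψ (c * a) = ψ (c' * a) := by
        intro a
        have := congrArg (fun Ψ : AddChar R ℂ => Ψ a) hcc
        simpa using this
      have h0 : ∀ a : R, ψ ((c - c') * a) = 1 := by
        intro a
        have harg : (c - c') * a = c * a + (-(c' * a)) := by ring
        rw [harg, AddChar.map_add_eq_mul, h' a, ← AddChar.map_add_eq_mul,
          add_neg_cancel, AddChar.map_zero_eq_one]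
      have := hnd _ h0
      exact sub_eq_zero.mp this
    have hbij : Function.Bijective (fun c : R => ψ.mulShift c) :=
      (Fintype.bijective_iff_injective_and_card _).mpr
        ⟨hinj, by rw [AddChar.card_eq]⟩
    intro η
    obtain ⟨c, hc⟩ := hbij.2 η
    exact ⟨c, fun a => by rw [← hc, AddChar.mulShift_apply]⟩
  -- trace computations on the standard basis
  have htrc : ∀ (β : Matrix (Fin 2) (Fin 2) R) (m : Matrix (Fin 2) (Fin 2) R),
      (β * m).trace = β 0 0 * m 0 0 + β 0 1 * m 1 0 + β 1 0 * m 0 1 + β 1 1 * m 1 1 := by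
    intro β m
    simp [Matrix.trace_fin_two, Matrix.mul_apply, Fin.sum_univ_two]
    ring
  refine ⟨?_, ?_, ?_, ?_⟩
  -- part 1: multiplicative in x
  · intro β x y
    obtain ⟨m, hm⟩ := hmem x
    obtain ⟨n, hn⟩ := hmem y
    have hxy : ((x * y).val.val : Matrix (Fin 2) (Fin 2) R) = x.val.val * y.val.val := rfl
    have h0 : ((x.val.val : Matrix (Fin 2) (Fin 2) R) - 1) * (y.val.val - 1) = 0 := by
      rw [hm, hn, add_sub_cancel_left, add_sub_cancel_left, Matrix.smul_mul,
        Matrix.mul_smul, smul_smul, hpii, zero_smul]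
    have hsum : (x.val.val : Matrix (Fin 2) (Fin 2) R) * y.val.val - 1
        = (x.val.val - 1) + (y.val.val - 1) := by
      calc (x.val.val : Matrix (Fin 2) (Fin 2) R) * y.val.val - 1
          = (x.val.val - 1) * (y.val.val - 1) + (x.val.val - 1) + (y.val.val - 1) := by
            noncomm_ring
        _ = (x.val.val - 1) + (y.val.val - 1) := by rw [h0, zero_add]
    simp only [Φ]
    rw [hxy, hsum, mul_add, Matrix.trace_add, AddChar.map_add_eq_mul]
  -- part 2: additive in β
  · intro β γ x
    simp only [Φ]
    rw [Matrix.add_mul, Matrix.trace_add, AddChar.map_add_eq_mul]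
  -- part 3
  · intro β
    have hkey3 : ∀ M : Matrix (Fin 2) (Fin 2) R, M.trace = 0 → (∀ x : K, Φ β x = 1) →
        ∃ d : R, (β * M).trace = p ^ (r - i) * d := by
      intro M hM hβ
      have h1 : ∀ a : R, ψ ((p ^ i * (β * M).trace) * a) = 1 := by
        intro a
        have h2 := hβ (elt (a • M))
        rw [hPhi β _ (by rw [Matrix.trace_smul, hM, smul_zero])] at h2
        rw [← h2]
        congr 1
        rw [Matrix.mul_smul, Matrix.trace_smul, smul_eq_mul]
        ring
      exact aux_cancel π hπ.ne_zero r i hir _ (hnd _ h1)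
    constructor
    · intro hβ
      obtain ⟨dH, hH⟩ := hkey3 !![1,0;0,-1] (by rw [Matrix.trace_fin_two_of]; ring) hβ
      obtain ⟨dE, hE⟩ := hkey3 !![0,1;0,0] (by rw [Matrix.trace_fin_two_of]; ring) hβ
      obtain ⟨dF, hF⟩ := hkey3 !![0,0;1,0] (by rw [Matrix.trace_fin_two_of]; ring) hβ
      rw [htrc] at hH hE hF
      simp at hH hE hF
      refine ⟨β 1 1, !![dH, dF; dE, 0], ?_⟩
      ext j k
      fin_cases j <;> fin_cases k <;>
        simp [Matrix.one_apply] <;>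
        first
          | linear_combination hH
          | linear_combination hE
          | linear_combination hF
          | ring
    · rintro ⟨z, γ, rfl⟩ x
      obtain ⟨m, hm0, rfl⟩ := hsurjK x
      rw [hPhi _ _ hm0]
      have hcomp : ((z • (1 : Matrix (Fin 2) (Fin 2) R) + p ^ (r - i) • γ) * m).trace
          = z * m.trace + p ^ (r - i) * (γ * m).trace := by
        rw [Matrix.add_mul, Matrix.smul_mul, Matrix.smul_mul, Matrix.one_mul,
          Matrix.trace_add, Matrix.trace_smul, Matrix.trace_smul, smul_eq_mul, smul_eq_mul]
      rw [hcomp, hm0, mul_zero, zero_add, ← mul_assoc, hpri, zero_mul,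
        AddChar.map_zero_eq_one]
  -- part 4
  · intro χ
    have hkey4 : ∀ M : Matrix (Fin 2) (Fin 2) R, M.trace = 0 → ∃ c : R,
        ∀ a : R, χ (elt (a • M)) = ψ (p ^ i * c * a) := by
      intro M hM
      have htrM : ∀ a : R, (a • M).trace = 0 := fun a => by
        rw [Matrix.trace_smul, hM, smul_zero]
      have h00 : elt ((0 : R) • M) = 1 := by
        apply helt_one _ (htrM 0)
        rw [zero_smul, smul_zero]
      set η : AddChar R ℂ :=
        { toFun := fun a => χ (elt (a • M)),
          map_zero_eq_one' := by
            show χ (elt ((0 : R) • M)) = 1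
            rw [h00, map_one],
          map_add_eq_mul' := by
            intro a b
            show χ (elt ((a + b) • M)) = χ (elt (a • M)) * χ (elt (b • M))
            rw [add_smul, ← helt_mul _ _ (htrM a) (htrM b), _root_.map_mul] } with hη
      obtain ⟨c, hc⟩ := hdual η
      have hzero : ∀ a : R, ψ ((c * p ^ (r - i)) * a) = 1 := by
        intro a
        have h1 : η (p ^ (r - i) * a) = 1 := by
          show χ (elt ((p ^ (r - i) * a) • M)) = 1
          have hsm : p ^ i • ((p ^ (r - i) * a) • M) = 0 := by
            rw [smul_smul, ← mul_assoc, hpri, zero_mul, zero_smul]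
          rw [helt_one _ (htrM _) hsm, map_one]
        rw [hc] at h1
        rw [← h1]
        congr 1
        ring
      have h2 : c * p ^ (r - i) = 0 := hnd _ hzero
      obtain ⟨d, hd⟩ := aux_cancel π hπ.ne_zero r (r - i) (by omega) c
        (by rw [← h2]; ring)
      rw [Nat.sub_sub_self hir] at hd
      refine ⟨d, fun a => ?_⟩
      have h3 := hc a
      rw [hd] at h3
      rw [show χ (elt (a • M)) = η a from rfl, h3, mul_assoc]
    obtain ⟨ch, hch⟩ := hkey4 !![1,0;0,-1] (by rw [Matrix.trace_fin_two_of]; ring)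
    obtain ⟨ce, hce⟩ := hkey4 !![0,1;0,0] (by rw [Matrix.trace_fin_two_of]; ring)
    obtain ⟨cf, hcf⟩ := hkey4 !![0,0;1,0] (by rw [Matrix.trace_fin_two_of]; ring)
    refine ⟨!![ch, cf; ce, 0], fun x => ?_⟩
    obtain ⟨m, hm0, rfl⟩ := hsurjK x
    have h11 : m 1 1 = - m 0 0 := by
      rw [Matrix.trace_fin_two] at hm0
      linear_combination hm0
    have hdec : m = m 0 0 • (!![1,0;0,-1] : Matrix (Fin 2) (Fin 2) R)
        + (m 0 1 • (!![0,1;0,0] : Matrix (Fin 2) (Fin 2) R)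
        + m 1 0 • (!![0,0;1,0] : Matrix (Fin 2) (Fin 2) R)) := by
      ext j k
      fin_cases j <;> fin_cases k <;>
        simp [Matrix.add_apply, Matrix.smul_apply, h11] <;> ring
    have tH : ((m 0 0 : R) • (!![1,0;0,-1] : Matrix (Fin 2) (Fin 2) R)).trace = 0 := by
      rw [Matrix.trace_smul, Matrix.trace_fin_two_of]; simp
    have tE : ((m 0 1 : R) • (!![0,1;0,0] : Matrix (Fin 2) (Fin 2) R)).trace = 0 := by
      rw [Matrix.trace_smul, Matrix.trace_fin_two_of]; simp
    have tF : ((m 1 0 : R) • (!![0,0;1,0] : Matrix (Fin 2) (Fin 2) R)).trace = 0 := by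
      rw [Matrix.trace_smul, Matrix.trace_fin_two_of]; simp
    have tEF : ((m 0 1 : R) • (!![0,1;0,0] : Matrix (Fin 2) (Fin 2) R)
        + m 1 0 • (!![0,0;1,0] : Matrix (Fin 2) (Fin 2) R)).trace = 0 := by
      rw [Matrix.trace_add, tE, tF, add_zero]
    calc Φ !![ch, cf; ce, 0] (elt m) = ψ (p ^ i * ((!![ch, cf; ce, 0] : Matrix (Fin 2) (Fin 2) R) * m).trace) :=
          hPhi _ _ hm0
      _ = ψ ((p ^ i * ch * m 0 0) + ((p ^ i * ce * m 0 1) + (p ^ i * cf * m 1 0))) := by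
          rw [htrc]
          congr 1
          simp [h11]
          ring
      _ = ψ (p ^ i * ch * m 0 0) * (ψ (p ^ i * ce * m 0 1) * ψ (p ^ i * cf * m 1 0)) := by
          rw [AddChar.map_add_eq_mul, AddChar.map_add_eq_mul]
      _ = χ (elt (m 0 0 • !![1,0;0,-1])) * (χ (elt (m 0 1 • !![0,1;0,0]))
            * χ (elt (m 1 0 • !![0,0;1,0]))) := by rw [hch, hce, hcf]
      _ = χ (elt m) := by
          rw [← _root_.map_mul, ← _root_.map_mul, helt_mul _ _ tE tF, helt_mul _ _ tH tEF, ← hdec]
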